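/- Let G be a bipartite graph, R a twin class of G with S = N(R), T the set of sisters of R, and W = N(S) \ (R ∪ T). Suppose |R| > |W| and T ≠ ∅. Let u ∈ T and let v be the unique vertex of N(u) \ S. Then for every integer k ≥ 1, G admits a biclustering of cost at most k if and only if G − uv admits a biclustering of cost at most k − 1. -/

import Mathlib

def BipartiteWith {V : Type*} (G : SimpleGraph V) (side : V → Bool) : Prop :=
  ∀ u v, G.Adj u v → side u ≠ side v

def BiclusterGraph {V : Type*} (G : SimpleGraph V) (side : V → Bool) : Prop :=
  ∀ u v, G.Reachable u v → side u ≠ side v → G.Adj u v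

def Biclustering {V : Type*} (B : SimpleGraph V) (side : V → Bool) : Prop :=
  BipartiteWith B side ∧ BiclusterGraph B side

/-- `t` is a sister of the twin class `R` with `S = N(R)`: it is a neighbor of `S`
outside `R`, it has no twin, and its neighborhood is `S` plus exactly one extra
vertex outside `S`. -/
def IsSisterOf {V : Type*} (G : SimpleGraph V) (side : V → Bool) (R S : Set V) (t : V) : Prop :=
  t ∈ (⋃ s ∈ S, G.neighborSet s) \ R ∧
  (∀ w, side w = side t → G.neighborSet w = G.neighborSet t → w = t) ∧
  (∃ v, v ∉ S ∧ G.neighborSet t = S ∪ {v})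

section Aux
variable {V : Type*}

lemma bool_side_eq {a b c : Bool} (h1 : a ≠ c) (h2 : b ≠ c) : a = b := by
  cases a <;> cases b <;> cases c <;> simp_all

lemma ncard_symmDiff_triangle [Fintype V] (A B C : Set V) :
    (symmDiff A C).ncard ≤ (symmDiff A B).ncard + (symmDiff B C).ncard := by
  refine le_trans (Set.ncard_le_ncard ?_ (Set.toFinite _)) (Set.ncard_union_le _ _)
  intro z hz
  rw [Set.mem_symmDiff] at hz
  simp only [Set.mem_union, Set.mem_symmDiff]
  by_cases hb : z ∈ B <;> tauto

lemma ncard_symmDiff_sdiff_le [Fintype V] (A B S : Set V) :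
    (symmDiff A (B \ S)).ncard ≤ (symmDiff A B).ncard + (B ∩ S).ncard := by
  refine le_trans (Set.ncard_le_ncard ?_ (Set.toFinite _)) (Set.ncard_union_le _ _)
  intro z hz
  rw [Set.mem_symmDiff] at hz
  simp only [Set.mem_union, Set.mem_symmDiff, Set.mem_diff, Set.mem_inter_iff] at *
  tauto

lemma symmDiff_union_singleton {S : Set V} {v : V} (hv : v ∉ S) :
    symmDiff (S ∪ {v}) S = {v} := by
  ext z
  rw [Set.mem_symmDiff]
  simp only [Set.mem_union, Set.mem_singleton_iff]
  constructor
  · intro h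
    rcases h with ⟨h1 | h1, h2⟩ | ⟨h1, h2⟩
    · exact absurd h1 h2
    · exact h1
    · exact absurd (Or.inl h1) h2
  · rintro rfl
    exact Or.inl ⟨Or.inr rfl, hv⟩

lemma cost_decomp [Fintype V] [DecidableEq V] (G B : SimpleGraph V) (side : V → Bool) (b : Bool)
    (hG : BipartiteWith G side) (hB : BipartiteWith B side) :
    (symmDiff G.edgeSet B.edgeSet).ncard
      = ∑ x ∈ Finset.univ.filter (fun x => side x = b),
          (symmDiff (G.neighborSet x) (B.neighborSet x)).ncard := by
  classical
  have hmm : ∀ (x y : V), (s(x,y) ∈ symmDiff G.edgeSet B.edgeSet) ↔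
      y ∈ symmDiff (G.neighborSet x) (B.neighborSet x) := by
    intro x y
    rw [Set.mem_symmDiff, Set.mem_symmDiff]
    simp [SimpleGraph.mem_edgeSet, SimpleGraph.mem_neighborSet]
  have hside : ∀ (x y : V), y ∈ symmDiff (G.neighborSet x) (B.neighborSet x) →
      side y ≠ side x := by
    intro x y hy
    rw [Set.mem_symmDiff] at hy
    rcases hy with ⟨h1, _⟩ | ⟨h1, _⟩
    · exact (hG x y h1).symm
    · exact (hB x y h1).symm
  rw [Set.ncard_eq_toFinset_card _ (Set.toFinite _)]
  have hEq : (Set.toFinite (symmDiff G.edgeSet B.edgeSet)).toFinset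
      = (Finset.univ.filter (fun x => side x = b)).biUnion
        (fun x => ((Set.toFinite (symmDiff (G.neighborSet x) (B.neighborSet x))).toFinset).image
          (fun y => s(x,y))) := by
    ext e
    simp only [Set.Finite.mem_toFinset, Finset.mem_biUnion, Finset.mem_filter, Finset.mem_univ,
      true_and, Finset.mem_image]
    induction e using Sym2.ind with
    | _ p q =>
      constructor
      · intro he
        have hpq : side p ≠ side q := by
          rw [Set.mem_symmDiff] at he
          rcases he with ⟨h1, _⟩ | ⟨h1, _⟩
          · exact hG p q h1
          · exact hB p q h1
        have hb : side p = b ∨ side q = b := by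
          cases hsp : side p <;> cases hsq : side q <;> cases b <;> simp_all
        rcases hb with hp | hq
        · exact ⟨p, hp, q, (hmm p q).mp he, rfl⟩
        · refine ⟨q, hq, p, (hmm q p).mp ?_, Sym2.eq_swap⟩
          rwa [Sym2.eq_swap] at he
      · rintro ⟨x, hx, y, hy, he⟩
        rw [Sym2.eq_iff] at he
        rcases he with ⟨h1, h2⟩ | ⟨h1, h2⟩
        · subst h1; subst h2
          exact (hmm x y).mpr hy
        · subst h1; subst h2
          rw [Sym2.eq_swap]
          exact (hmm x y).mpr hy
  rw [hEq, Finset.card_biUnion]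
  · refine Finset.sum_congr rfl (fun x hx => ?_)
    rw [Finset.card_image_of_injective _ (fun y y' h => Sym2.congr_right.mp h),
      ← Set.ncard_eq_toFinset_card _ (Set.toFinite _)]
  · intro x hx x' hx' hxx'
    simp only [Finset.mem_coe, Finset.mem_filter, Finset.mem_univ, true_and] at hx hx'
    rw [Function.onFun, Finset.disjoint_left]
    rintro e he he'
    simp only [Finset.mem_image, Set.Finite.mem_toFinset] at he he'
    obtain ⟨y, hy, rfl⟩ := he
    obtain ⟨y', hy', heq⟩ := he'
    rw [Sym2.eq_iff] at heq
    rcases heq with ⟨h1, h2⟩ | ⟨h1, h2⟩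
    · exact hxx' (h1.symm)
    · subst h1
      exact hside _ _ hy (hx'.trans hx.symm)

lemma blocks_eq_or_disjoint (B : SimpleGraph V) (side : V → Bool) (hB : Biclustering B side)
    {b : Bool} {x x' : V} (hx : side x = b) (hx' : side x' = b) :
    B.neighborSet x = B.neighborSet x' ∨ Disjoint (B.neighborSet x) (B.neighborSet x') := by
  by_cases hd : Disjoint (B.neighborSet x) (B.neighborSet x')
  · exact Or.inr hd
  · left
    rw [Set.not_disjoint_iff] at hd
    obtain ⟨y, hy1, hy2⟩ := hd
    have key : ∀ p p' : V, side p = b → side p' = b → B.Adj p y → B.Adj p' y →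
        B.neighborSet p ⊆ B.neighborSet p' := by
      intro p p' hp hp' hpy hp'y z hz
      have hzadj : B.Adj p z := hz
      have hreach : B.Reachable p' z :=
        (hp'y.reachable.trans hpy.reachable.symm).trans hzadj.reachable
      have hzs : side p' ≠ side z := by
        have := hB.1 p z hzadj
        rw [hp] at this; rw [hp']
        exact this
      exact hB.2 p' z hreach hzs
    exact Set.Subset.antisymm (key x x' hx hx' hy1 hy2) (key x' x hx' hx hy2 hy1)

lemma build_bicluster [Fintype V] (side : V → Bool) (b : Bool) (g : V → Set V)
    (hgr : ∀ x, side x = b → ∀ y ∈ g x, side y ≠ b)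
    (hgd : ∀ x x', side x = b → side x' = b → g x = g x' ∨ Disjoint (g x) (g x')) :
    ∃ B2 : SimpleGraph V, Biclustering B2 side ∧
      (∀ x, side x = b → B2.neighborSet x = g x) := by
  classical
  let Adj2 : V → V → Prop := fun p q => (side p = b ∧ q ∈ g p) ∨ (side q = b ∧ p ∈ g q)
  have hsymm : Symmetric Adj2 := by
    intro p q h; rcases h with h | h
    · exact Or.inr h
    · exact Or.inl h
  have hirr : Irreflexive Adj2 := by
    intro p h
    rcases h with ⟨h1, h2⟩ | ⟨h1, h2⟩ <;> exact (hgr p h1 p h2) h1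
  let B2 : SimpleGraph V := ⟨Adj2, ⟨fun p q h => hsymm h⟩, ⟨fun p => hirr p⟩⟩
  have hAdj2 : ∀ p q, B2.Adj p q ↔ Adj2 p q := fun p q => Iff.rfl
  have hnbhd : ∀ x, side x = b → B2.neighborSet x = g x := by
    intro x hx
    ext q
    simp only [SimpleGraph.mem_neighborSet, hAdj2]
    constructor
    · rintro (⟨h1, h2⟩ | ⟨h1, h2⟩)
      · exact h2
      · exact absurd hx (hgr q h1 x h2)
    · intro hq; exact Or.inl ⟨hx, hq⟩
  have hbip : BipartiteWith B2 side := by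
    intro p q h
    rcases h with ⟨h1, h2⟩ | ⟨h1, h2⟩
    · rw [h1]; exact fun hc => (hgr p h1 q h2) hc.symm
    · rw [h1]; intro hc; exact (hgr q h1 p h2) hc
  let κ : V → (Set V) ⊕ V := fun p =>
    if h : ∃ x, side x = b ∧ p ∈ g x then Sum.inl (g h.choose)
    else if side p = b ∧ (g p).Nonempty then Sum.inl (g p) else Sum.inr p
  have hnotleft : ∀ p, side p = b → ¬ ∃ x, side x = b ∧ p ∈ g x := by
    rintro p hp ⟨x, hx, hpx⟩
    exact (hgr x hx p hpx) hp
  have hκleft : ∀ p, side p = b → (g p).Nonempty → κ p = Sum.inl (g p) := by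
    intro p hp hne
    simp only [κ]
    rw [dif_neg (hnotleft p hp), if_pos ⟨hp, hne⟩]
  have hκleft0 : ∀ p, side p = b → ¬ (g p).Nonempty → κ p = Sum.inr p := by
    intro p hp hne
    simp only [κ]
    rw [dif_neg (hnotleft p hp), if_neg (fun hc => hne hc.2)]
  have hκright : ∀ p, side p ≠ b → (h : ∃ x, side x = b ∧ p ∈ g x) →
      κ p = Sum.inl (g h.choose) := by
    intro p hp h
    simp only [κ]
    rw [dif_pos h]
  have hκright0 : ∀ p, side p ≠ b → ¬ (∃ x, side x = b ∧ p ∈ g x) → κ p = Sum.inr p := by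
    intro p hp h
    simp only [κ]
    rw [dif_neg h, if_neg (fun hc => hp hc.1)]
  have hgchoose : ∀ p (h : ∃ x, side x = b ∧ p ∈ g x) x, side x = b → p ∈ g x →
      g h.choose = g x := by
    intro p h x hx hpx
    obtain ⟨h1, h2⟩ := h.choose_spec
    rcases hgd h.choose x h1 hx with he | hd
    · exact he
    · exact absurd hpx (Set.disjoint_left.mp hd h2)
  have haux : ∀ p q, side p = b → q ∈ g p → κ p = κ q := by
    intro p q hp hq
    have hqside : side q ≠ b := hgr p hp q hq
    have hcov : ∃ x, side x = b ∧ q ∈ g x := ⟨p, hp, hq⟩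
    rw [hκleft p hp ⟨q, hq⟩, hκright q hqside hcov, hgchoose q hcov p hp hq]
  have hκadj : ∀ p q, B2.Adj p q → κ p = κ q := by
    intro p q h
    rcases h with ⟨h1, h2⟩ | ⟨h1, h2⟩
    · exact haux p q h1 h2
    · exact (haux q p h1 h2).symm
  have hwalk : ∀ p q, B2.Walk p q → p = q ∨ κ p = κ q := by
    intro p q w
    induction w with
    | nil => exact Or.inl rfl
    | cons h w ih =>
      right
      have h1 := hκadj _ _ h
      rcases ih with rfl | h2
      · exact h1
      · exact h1.trans h2
  have hmain : ∀ p q, side p = b → side q ≠ b → κ p = κ q → B2.Adj p q := by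
    intro p q hp hq hκ
    by_cases hcov : ∃ x, side x = b ∧ q ∈ g x
    · rw [hκright q hq hcov] at hκ
      by_cases hne : (g p).Nonempty
      · rw [hκleft p hp hne] at hκ
        have heq : g p = g hcov.choose := Sum.inl.inj hκ
        obtain ⟨h1, h2⟩ := hcov.choose_spec
        rw [← heq] at h2
        exact Or.inl ⟨hp, h2⟩
      · rw [hκleft0 p hp hne] at hκ
        exact absurd hκ (by simp)
    · rw [hκright0 q hq hcov] at hκ
      by_cases hne : (g p).Nonempty
      · rw [hκleft p hp hne] at hκ
        exact absurd hκ (by simp)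
      · rw [hκleft0 p hp hne] at hκ
        have : p = q := Sum.inr.inj hκ
        subst this
        exact absurd hp hq
  have hbic : BiclusterGraph B2 side := by
    intro p q hre hside
    obtain ⟨w⟩ := hre
    rcases hwalk p q w with rfl | hκ
    · exact absurd rfl hside
    · by_cases hp : side p = b
      · have hq : side q ≠ b := fun h => hside (hp.trans h.symm)
        exact hmain p q hp hq hκ
      · have hq : side q = b := by
          cases hsp : side p <;> cases hsq : side q <;> cases b <;> simp_all
        exact (hmain q p hq hp hκ.symm).symm
  exact ⟨B2, ⟨hbip, hbic⟩, hnbhd⟩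

end Aux

lemma exists_good_bicluster {V : Type*} [Fintype V] [DecidableEq V]
    (G : SimpleGraph V) (side : V → Bool) (hG : BipartiteWith G side)
    (r : V) (R S T W : Set V)
    (hR : R = {w | side w = side r ∧ G.neighborSet w = G.neighborSet r})
    (hS : S = ⋃ x ∈ R, G.neighborSet x)
    (hT : T = {t | IsSisterOf G side R S t})
    (hW : W = (⋃ s ∈ S, G.neighborSet s) \ (R ∪ T))
    (hcard : W.ncard < R.ncard)
    (u : V) (hu : u ∈ T)
    (v : V) (hv : v ∉ S) (huv : G.neighborSet u = S ∪ {v})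
    (B : SimpleGraph V) (hB : Biclustering B side) :
    ∃ B' : SimpleGraph V, Biclustering B' side ∧ v ∉ B'.neighborSet u ∧
      (symmDiff G.edgeSet B'.edgeSet).ncard ≤ (symmDiff G.edgeSet B.edgeSet).ncard := by
  classical
  have hrR : r ∈ R := by rw [hR]; exact ⟨rfl, rfl⟩
  have hRnb : ∀ x ∈ R, G.neighborSet x = G.neighborSet r := by
    intro x hx; rw [hR] at hx; exact hx.2
  have hRside : ∀ x ∈ R, side x = side r := by
    intro x hx; rw [hR] at hx; exact hx.1
  have hSr : S = G.neighborSet r := by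
    rw [hS]; ext y
    simp only [Set.mem_iUnion, exists_prop]
    constructor
    · rintro ⟨x, hx, hy⟩; rw [hRnb x hx] at hy; exact hy
    · intro hy; exact ⟨r, hrR, hy⟩
  have hRS : ∀ x ∈ R, G.neighborSet x = S := by
    intro x hx; rw [hRnb x hx, hSr]
  have hSside : ∀ s ∈ S, side s ≠ side r := by
    intro s hs
    rw [hSr] at hs
    exact (hG r s hs).symm
  have hsisters : ∀ t ∈ T, IsSisterOf G side R S t := by
    intro t ht; rwa [hT] at ht
  have hTside : ∀ t ∈ T, side t = side r := by
    intro t ht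
    obtain ⟨⟨hmem, _⟩, _, _⟩ := hsisters t ht
    simp only [Set.mem_iUnion, exists_prop] at hmem
    obtain ⟨s, hs, hts⟩ := hmem
    exact bool_side_eq (Ne.symm (hG s t hts)) (Ne.symm (hSside s hs))
  have hWmem : ∀ w ∈ W, (w ∈ ⋃ s ∈ S, G.neighborSet s) ∧ w ∉ R ∧ w ∉ T := by
    intro w hw; rw [hW] at hw
    exact ⟨hw.1, fun h => hw.2 (Or.inl h), fun h => hw.2 (Or.inr h)⟩
  have hWside : ∀ w ∈ W, side w = side r := by
    intro w hw
    obtain ⟨hmem, _, _⟩ := hWmem w hw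
    simp only [Set.mem_iUnion, exists_prop] at hmem
    obtain ⟨s, hs, hws⟩ := hmem
    exact bool_side_eq (Ne.symm (hG s w hws)) (Ne.symm (hSside s hs))
  have huside : side u = side r := hTside u hu
  have hSne : S.Nonempty := by
    obtain ⟨⟨hmem, _⟩, _, _⟩ := hsisters u hu
    simp only [Set.mem_iUnion, exists_prop] at hmem
    obtain ⟨s, hs, _⟩ := hmem
    exact ⟨s, hs⟩
  have hTnotR : ∀ t ∈ T, t ∉ R := fun t ht => ((hsisters t ht).1).2
  have hcup : ∀ x, x ∉ R → x ∉ T → x ∉ W → Disjoint (G.neighborSet x) S := by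
    intro x hxR hxT hxW
    rw [Set.disjoint_left]
    intro s hsx hsS
    apply hxW
    rw [hW]
    refine ⟨?_, ?_⟩
    · simp only [Set.mem_iUnion, exists_prop]
      exact ⟨s, hsS, G.adj_symm hsx⟩
    · rintro (h | h)
      · exact hxR h
      · exact hxT h
  have hcostB := cost_decomp G B side (side r) hG hB.1
  by_cases hadj : v ∈ B.neighborSet u
  swap
  · exact ⟨B, hB, hadj, le_rfl⟩
  set Opt : Set (Set V) := insert ∅ (B.neighborSet '' {x | side x = side r}) with hOpt
  have hNBO : ∀ x, side x = side r → B.neighborSet x ∈ Opt := by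
    intro x hx; rw [hOpt]; exact Set.mem_insert_iff.mpr (Or.inr ⟨x, hx, rfl⟩)
  have hOblocks : ∀ Y ∈ Opt, ∀ x, side x = side r →
      B.neighborSet x = Y ∨ Disjoint (B.neighborSet x) Y := by
    intro Y hY x hx
    rw [hOpt, Set.mem_insert_iff] at hY
    rcases hY with rfl | ⟨x0, hx0, rfl⟩
    · exact Or.inr (by simp)
    · exact blocks_eq_or_disjoint B side hB hx hx0
  have hOright : ∀ Y ∈ Opt, ∀ y ∈ Y, side y ≠ side r := by
    intro Y hY y hy
    rw [hOpt, Set.mem_insert_iff] at hY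
    rcases hY with rfl | ⟨x0, hx0, rfl⟩
    · exact absurd hy (Set.notMem_empty y)
    · have := hB.1 x0 y hy
      rw [hx0] at this
      exact this.symm
  by_cases hc1 : ∃ Y ∈ Opt, v ∉ Y ∧
      (symmDiff (G.neighborSet u) Y).ncard ≤ (symmDiff (G.neighborSet u) (B.neighborSet u)).ncard
  · -- Case 1 : just move u
    obtain ⟨Y, hYO, hvY, hle⟩ := hc1
    set g : V → Set V := fun x => if x = u then Y else B.neighborSet x with hg
    have hgvals : ∀ x, g x = Y ∨ g x = B.neighborSet x := by
      intro x; rw [hg]; dsimp only; by_cases hxu : x = u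
      · rw [if_pos hxu]; exact Or.inl rfl
      · rw [if_neg hxu]; exact Or.inr rfl
    have hgr : ∀ x, side x = side r → ∀ y ∈ g x, side y ≠ side r := by
      intro x hx y hy
      rcases hgvals x with h | h <;> rw [h] at hy
      · exact hOright Y hYO y hy
      · have := hB.1 x y hy
        rw [hx] at this
        exact this.symm
    have hgd : ∀ x x', side x = side r → side x' = side r →
        g x = g x' ∨ Disjoint (g x) (g x') := by
      intro x x' hx hx'
      rcases hgvals x with h1 | h1 <;> rcases hgvals x' with h2 | h2 <;> rw [h1, h2]
      · exact Or.inl rfl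
      · rcases hOblocks Y hYO x' hx' with he | hd
        · exact Or.inl he.symm
        · exact Or.inr hd.symm
      · rcases hOblocks Y hYO x hx with he | hd
        · exact Or.inl he
        · exact Or.inr hd
      · exact blocks_eq_or_disjoint B side hB hx hx'
    obtain ⟨B2, hB2, hNB2⟩ := build_bicluster side (side r) g hgr hgd
    refine ⟨B2, hB2, ?_, ?_⟩
    · rw [hNB2 u huside, hg]; simpa using hvY
    · rw [cost_decomp G B2 side (side r) hG hB2.1, hcostB]
      apply Finset.sum_le_sum
      intro x hx
      rw [hNB2 x (by simpa using hx)]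
      by_cases hxu : x = u
      · subst hxu; rw [hg]; dsimp only; rw [if_pos rfl]; exact hle
      · rw [hg]; dsimp only; rw [if_neg hxu]
  · -- Case 2
    push_neg at hc1
    obtain ⟨YR, hYRO, hYRmin⟩ := Set.exists_min_image Opt (fun Y => (symmDiff Y S).ncard)
      (Set.toFinite _) ⟨∅, Set.mem_insert _ _⟩
    have hμcB : ∀ x, side x = side r → G.neighborSet x = S →
        (symmDiff YR S).ncard ≤ (symmDiff (G.neighborSet x) (B.neighborSet x)).ncard := by
      intro x hx hNGx
      have h1 := hYRmin (B.neighborSet x) (hNBO x hx)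
      rw [hNGx, symmDiff_comm S (B.neighborSet x)]
      exact h1
    have hμ1 : 1 ≤ (symmDiff YR S).ncard := by
      by_contra hcon
      have h0 : (symmDiff YR S).ncard = 0 := by omega
      have hYRS : YR = S := symmDiff_eq_bot.mp ((Set.ncard_eq_zero (Set.toFinite _)).mp h0)
      have hvYR : v ∉ YR := by rw [hYRS]; exact hv
      have hlt := hc1 YR hYRO hvYR
      rw [hYRS, huv, symmDiff_union_singleton hv, Set.ncard_singleton] at hlt
      have hcBu0 : (symmDiff (S ∪ {v}) (B.neighborSet u)).ncard = 0 := by omega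
      have hNBu : B.neighborSet u = S ∪ {v} :=
        (symmDiff_eq_bot.mp ((Set.ncard_eq_zero (Set.toFinite _)).mp hcBu0)).symm
      rcases hOblocks YR hYRO u huside with he | hd
      · rw [hNBu, hYRS] at he
        exact hv (he ▸ Set.mem_union_right _ rfl)
      · obtain ⟨s, hs⟩ := hSne
        have h4 : s ∈ B.neighborSet u := by rw [hNBu]; exact Set.mem_union_left _ hs
        have h5 : s ∈ YR := by rw [hYRS]; exact hs
        exact Set.disjoint_left.mp hd h4 h5
    set g : V → Set V := fun x => if x ∈ R ∨ x ∈ T then S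
      else if (symmDiff (G.neighborSet x) S).ncard
          ≤ (symmDiff (G.neighborSet x) (B.neighborSet x \ S)).ncard then S
      else B.neighborSet x \ S with hg
    have hgval : ∀ x, g x = S ∨ g x = B.neighborSet x \ S := by
      intro x; rw [hg]; dsimp only
      split_ifs <;> simp
    have hgRT : ∀ x, x ∈ R ∨ x ∈ T → g x = S := by
      intro x hx; rw [hg]; dsimp only; rw [if_pos hx]
    have hgmin : ∀ x, x ∉ R → x ∉ T →
        (symmDiff (G.neighborSet x) (g x)).ncard ≤ (symmDiff (G.neighborSet x) S).ncard ∧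
        (symmDiff (G.neighborSet x) (g x)).ncard
          ≤ (symmDiff (G.neighborSet x) (B.neighborSet x \ S)).ncard := by
      intro x hxR hxT
      rw [hg]; dsimp only
      rw [if_neg (by rintro (h | h); exacts [hxR h, hxT h])]
      split_ifs with hcmp
      · exact ⟨le_rfl, hcmp⟩
      · exact ⟨le_of_lt (lt_of_not_ge hcmp), le_rfl⟩
    have hgr : ∀ x, side x = side r → ∀ y ∈ g x, side y ≠ side r := by
      intro x hx y hy
      rcases hgval x with h | h <;> rw [h] at hy
      · exact hSside y hy
      · have := hB.1 x y hy.1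
        rw [hx] at this
        exact this.symm
    have hgd : ∀ x x', side x = side r → side x' = side r →
        g x = g x' ∨ Disjoint (g x) (g x') := by
      intro x x' hx hx'
      rcases hgval x with h1 | h1 <;> rcases hgval x' with h2 | h2 <;> rw [h1, h2]
      · exact Or.inl rfl
      · exact Or.inr disjoint_sdiff_self_right
      · exact Or.inr disjoint_sdiff_self_left
      · rcases blocks_eq_or_disjoint B side hB hx hx' with he | hd
        · exact Or.inl (by rw [he])
        · exact Or.inr (hd.mono sdiff_le sdiff_le)
    obtain ⟨B2, hB2, hNB2⟩ := build_bicluster side (side r) g hgr hgd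
    refine ⟨B2, hB2, ?_, ?_⟩
    · rw [hNB2 u huside, hgRT u (Or.inr hu)]; exact hv
    · rw [cost_decomp G B2 side (side r) hG hB2.1, hcostB]
      have hrw : ∑ x ∈ Finset.univ.filter (fun x => side x = side r),
          (symmDiff (G.neighborSet x) (B2.neighborSet x)).ncard
          = ∑ x ∈ Finset.univ.filter (fun x => side x = side r),
          (symmDiff (G.neighborSet x) (g x)).ncard := by
        refine Finset.sum_congr rfl (fun x hx => ?_)
        rw [hNB2 x (by simpa using hx)]
      rw [hrw]
      set F := Finset.univ.filter (fun x => side x = side r) with hF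
      set Rf := (Set.toFinite R).toFinset with hRf
      set Tf := (Set.toFinite T).toFinset with hTf
      set Wf := (Set.toFinite W).toFinset with hWf
      have hRfm : ∀ x : V, x ∈ Rf ↔ x ∈ R := fun x => Set.Finite.mem_toFinset _
      have hTfm : ∀ x : V, x ∈ Tf ↔ x ∈ T := fun x => Set.Finite.mem_toFinset _
      have hWfm : ∀ x : V, x ∈ Wf ↔ x ∈ W := fun x => Set.Finite.mem_toFinset _
      have hFm : ∀ x : V, x ∈ F ↔ side x = side r := by
        intro x; simp [hF]
      have hsub : Rf ∪ Tf ∪ Wf ⊆ F := by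
        intro x hx
        rw [Finset.mem_union, Finset.mem_union] at hx
        rw [hFm]
        rcases hx with (hx | hx) | hx
        · exact hRside x ((hRfm x).mp hx)
        · exact hTside x ((hTfm x).mp hx)
        · exact hWside x ((hWfm x).mp hx)
      have hdRT : Disjoint Rf Tf := by
        rw [Finset.disjoint_left]
        intro x hx hx'
        exact hTnotR x ((hTfm x).mp hx') ((hRfm x).mp hx)
      have hdRTW : Disjoint (Rf ∪ Tf) Wf := by
        rw [Finset.disjoint_left]
        intro x hx hx'
        obtain ⟨_, hwR, hwT⟩ := hWmem x ((hWfm x).mp hx')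
        rw [Finset.mem_union] at hx
        rcases hx with hx | hx
        · exact hwR ((hRfm x).mp hx)
        · exact hwT ((hTfm x).mp hx)
      have hsplit : ∀ f : V → ℕ, ∑ x ∈ F, f x
          = ∑ x ∈ F \ (Rf ∪ Tf ∪ Wf), f x
            + (∑ x ∈ Rf, f x + ∑ x ∈ Tf, f x + ∑ x ∈ Wf, f x) := by
        intro f
        rw [← Finset.sum_sdiff hsub, Finset.sum_union hdRTW, Finset.sum_union hdRT]
      rw [hsplit (fun x => (symmDiff (G.neighborSet x) (g x)).ncard),
          hsplit (fun x => (symmDiff (G.neighborSet x) (B.neighborSet x)).ncard)]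
      have hA : ∑ x ∈ Rf, (symmDiff (G.neighborSet x) (g x)).ncard = 0 := by
        refine Finset.sum_eq_zero (fun x hx => ?_)
        have hxR := (hRfm x).mp hx
        rw [hgRT x (Or.inl hxR), hRS x hxR, symmDiff_self, Set.bot_eq_empty, Set.ncard_empty]
      have hB1 : (symmDiff YR S).ncard * Rf.card
          ≤ ∑ x ∈ Rf, (symmDiff (G.neighborSet x) (B.neighborSet x)).ncard := by
        have h1 := Finset.card_nsmul_le_sum Rf
          (fun x => (symmDiff (G.neighborSet x) (B.neighborSet x)).ncard) ((symmDiff YR S).ncard)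
          (fun x hx => hμcB x (hRside x ((hRfm x).mp hx)) (hRS x ((hRfm x).mp hx)))
        rw [smul_eq_mul] at h1
        calc (symmDiff YR S).ncard * Rf.card = Rf.card * (symmDiff YR S).ncard :=
              Nat.mul_comm _ _
        _ ≤ _ := h1
      have hTone : ∀ t ∈ Tf, (symmDiff (G.neighborSet t) (g t)).ncard = 1 := by
        intro t ht
        have htT := (hTfm t).mp ht
        obtain ⟨_, _, ⟨vt, hvtS, hvtN⟩⟩ := hsisters t htT
        rw [hgRT t (Or.inr htT), hvtN, symmDiff_union_singleton hvtS, Set.ncard_singleton]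
      have hT0 : ∀ t ∈ Tf, ∀ t' ∈ Tf,
          (symmDiff (G.neighborSet t) (B.neighborSet t)).ncard = 0 →
          (symmDiff (G.neighborSet t') (B.neighborSet t')).ncard = 0 → t = t' := by
        intro t ht t' ht' h h'
        have htT := (hTfm t).mp ht
        have ht'T := (hTfm t').mp ht'
        have hNBt : G.neighborSet t = B.neighborSet t :=
          symmDiff_eq_bot.mp ((Set.ncard_eq_zero (Set.toFinite _)).mp h)
        have hNBt' : G.neighborSet t' = B.neighborSet t' :=
          symmDiff_eq_bot.mp ((Set.ncard_eq_zero (Set.toFinite _)).mp h')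
        obtain ⟨_, hnotwin, _⟩ := hsisters t htT
        rcases blocks_eq_or_disjoint B side hB (hTside t htT) (hTside t' ht'T) with he | hd
        · exact (hnotwin t' ((hTside t' ht'T).trans (hTside t htT).symm)
            (by rw [hNBt', ← he, ← hNBt])).symm
        · obtain ⟨_, _, ⟨vt, hvtS, hvtN⟩⟩ := hsisters t htT
          obtain ⟨_, _, ⟨vt', hvtS', hvtN'⟩⟩ := hsisters t' ht'T
          obtain ⟨s, hs⟩ := hSne
          have h1 : s ∈ B.neighborSet t := by
            rw [← hNBt, hvtN]; exact Set.mem_union_left _ hs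
          have h2 : s ∈ B.neighborSet t' := by
            rw [← hNBt', hvtN']; exact Set.mem_union_left _ hs
          exact absurd h2 (Set.disjoint_left.mp hd h1)
      have hC : ∑ x ∈ Tf, (symmDiff (G.neighborSet x) (g x)).ncard
          ≤ ∑ x ∈ Tf, (symmDiff (G.neighborSet x) (B.neighborSet x)).ncard + 1 := by
        have h5 : ∑ x ∈ Tf, (symmDiff (G.neighborSet x) (g x)).ncard = Tf.card := by
          rw [Finset.sum_congr rfl hTone, Finset.sum_const, smul_eq_mul, mul_one]
        rw [h5]
        by_cases hex : ∃ t ∈ Tf, (symmDiff (G.neighborSet t) (B.neighborSet t)).ncard = 0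
        · obtain ⟨t0, ht0, hcBt0⟩ := hex
          have h1 : ∀ t ∈ Tf.erase t0,
              1 ≤ (symmDiff (G.neighborSet t) (B.neighborSet t)).ncard := by
            intro t ht
            obtain ⟨hne, htTf⟩ := Finset.mem_erase.mp ht
            rcases Nat.eq_zero_or_pos
              ((symmDiff (G.neighborSet t) (B.neighborSet t)).ncard) with h | h
            · exact absurd (hT0 t htTf t0 ht0 h hcBt0) hne
            · exact h
          have h2 := Finset.card_nsmul_le_sum (Tf.erase t0)
            (fun x => (symmDiff (G.neighborSet x) (B.neighborSet x)).ncard) 1 h1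
          rw [smul_eq_mul, mul_one] at h2
          have h3 : ∑ x ∈ Tf.erase t0, (symmDiff (G.neighborSet x) (B.neighborSet x)).ncard
              ≤ ∑ x ∈ Tf, (symmDiff (G.neighborSet x) (B.neighborSet x)).ncard :=
            Finset.sum_le_sum_of_subset (Finset.erase_subset _ _)
          have h4 : (Tf.erase t0).card = Tf.card - 1 := Finset.card_erase_of_mem ht0
          have h6 : 1 ≤ Tf.card := Finset.card_pos.mpr ⟨t0, ht0⟩
          omega
        · push_neg at hex
          have h1 : ∀ t ∈ Tf, 1 ≤ (symmDiff (G.neighborSet t) (B.neighborSet t)).ncard :=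
            fun t ht => Nat.one_le_iff_ne_zero.mpr (hex t ht)
          have h2 := Finset.card_nsmul_le_sum Tf
            (fun x => (symmDiff (G.neighborSet x) (B.neighborSet x)).ncard) 1 h1
          rw [smul_eq_mul, mul_one] at h2
          omega
      have hDone : ∀ w ∈ Wf, (symmDiff (G.neighborSet w) (g w)).ncard
          ≤ (symmDiff (G.neighborSet w) (B.neighborSet w)).ncard + (symmDiff YR S).ncard := by
        intro w hw
        have hwW := (hWfm w).mp hw
        obtain ⟨_, hwR, hwT⟩ := hWmem w hwW
        obtain ⟨hle1, hle2⟩ := hgmin w hwR hwT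
        rcases hOblocks YR hYRO w (hWside w hwW) with he | hd
        · refine le_trans hle1
            (le_trans (ncard_symmDiff_triangle _ (B.neighborSet w) _) ?_)
          rw [he]
        · refine le_trans hle2 (le_trans (ncard_symmDiff_sdiff_le _ _ _) ?_)
          have hsub2 : B.neighborSet w ∩ S ⊆ symmDiff YR S := by
            intro z hz
            rw [Set.mem_symmDiff]
            exact Or.inr ⟨hz.2, Set.disjoint_left.mp hd hz.1⟩
          exact Nat.add_le_add_left (Set.ncard_le_ncard hsub2 (Set.toFinite _)) _
      have hD : ∑ x ∈ Wf, (symmDiff (G.neighborSet x) (g x)).ncard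
          ≤ ∑ x ∈ Wf, (symmDiff (G.neighborSet x) (B.neighborSet x)).ncard
            + (symmDiff YR S).ncard * Wf.card := by
        calc ∑ x ∈ Wf, (symmDiff (G.neighborSet x) (g x)).ncard
            ≤ ∑ x ∈ Wf, ((symmDiff (G.neighborSet x) (B.neighborSet x)).ncard
              + (symmDiff YR S).ncard) := Finset.sum_le_sum hDone
        _ = _ := by rw [Finset.sum_add_distrib, Finset.sum_const, smul_eq_mul, mul_comm]
      have hE : ∑ x ∈ F \ (Rf ∪ Tf ∪ Wf), (symmDiff (G.neighborSet x) (g x)).ncard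
          ≤ ∑ x ∈ F \ (Rf ∪ Tf ∪ Wf),
              (symmDiff (G.neighborSet x) (B.neighborSet x)).ncard := by
        refine Finset.sum_le_sum (fun x hx => ?_)
        obtain ⟨hxF, hxn⟩ := Finset.mem_sdiff.mp hx
        rw [Finset.mem_union, Finset.mem_union] at hxn
        push_neg at hxn
        obtain ⟨⟨hxR, hxT⟩, hxW⟩ := hxn
        rw [hRfm] at hxR
        rw [hTfm] at hxT
        rw [hWfm] at hxW
        have hdisj := hcup x hxR hxT hxW
        obtain ⟨_, hle2⟩ := hgmin x hxR hxT
        refine le_trans hle2 (Set.ncard_le_ncard ?_ (Set.toFinite _))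
        intro z hz
        rw [Set.mem_symmDiff] at hz ⊢
        rcases hz with ⟨h1, h2⟩ | ⟨h1, h2⟩
        · exact Or.inl ⟨h1, fun hzNB => h2 ⟨hzNB, Set.disjoint_left.mp hdisj h1⟩⟩
        · exact Or.inr ⟨h1.1, h2⟩
      have hcards : Wf.card + 1 ≤ Rf.card := by
        have h1 : W.ncard = Wf.card := by rw [hWf]; exact Set.ncard_eq_toFinset_card _ _
        have h2 : R.ncard = Rf.card := by rw [hRf]; exact Set.ncard_eq_toFinset_card _ _
        omega
      have hmul : (symmDiff YR S).ncard * Wf.card + (symmDiff YR S).ncard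
          ≤ (symmDiff YR S).ncard * Rf.card := by
        calc (symmDiff YR S).ncard * Wf.card + (symmDiff YR S).ncard
            = (symmDiff YR S).ncard * (Wf.card + 1) := by ring
        _ ≤ (symmDiff YR S).ncard * Rf.card := Nat.mul_le_mul_left _ hcards
      linarith [hA, hB1, hC, hD, hE, hmul, hμ1]

theorem stmt_5 {V : Type*} [Fintype V] [DecidableEq V]
    (G : SimpleGraph V) (side : V → Bool) (hG : BipartiteWith G side)
    (r : V) (R S T W : Set V)
    (hR : R = {w | side w = side r ∧ G.neighborSet w = G.neighborSet r})
    (hS : S = ⋃ x ∈ R, G.neighborSet x)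
    (hT : T = {t | IsSisterOf G side R S t})
    (hW : W = (⋃ s ∈ S, G.neighborSet s) \ (R ∪ T))
    (hcard : W.ncard < R.ncard)
    (u : V) (hu : u ∈ T)
    (v : V) (hv : v ∉ S) (huv : G.neighborSet u = S ∪ {v})
    (k : ℕ) (hk : 1 ≤ k) :
    (∃ B : SimpleGraph V, Biclustering B side ∧
        (symmDiff G.edgeSet B.edgeSet).ncard ≤ k) ↔
    (∃ B : SimpleGraph V, Biclustering B side ∧
        (symmDiff (G.deleteEdges {s(u, v)}).edgeSet B.edgeSet).ncard ≤ k - 1) := by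
  classical
  have huvG : G.Adj u v := by
    have h1 : v ∈ G.neighborSet u := by rw [huv]; exact Set.mem_union_right _ rfl
    exact h1
  have he_mem : s(u,v) ∈ G.edgeSet := huvG
  have hdel : (G.deleteEdges {s(u,v)}).edgeSet = G.edgeSet \ {s(u,v)} :=
    SimpleGraph.edgeSet_deleteEdges _
  constructor
  · rintro ⟨B, hBc, hcost⟩
    obtain ⟨B', hB', hvnB', hle⟩ := exists_good_bicluster G side hG r R S T W hR hS hT hW
      hcard u hu v hv huv B hBc
    refine ⟨B', hB', ?_⟩
    have hnB : s(u,v) ∉ B'.edgeSet := by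
      rw [SimpleGraph.mem_edgeSet]
      exact fun h => hvnB' h
    have hmemD : s(u,v) ∈ symmDiff G.edgeSet B'.edgeSet := by
      rw [Set.mem_symmDiff]; exact Or.inl ⟨he_mem, hnB⟩
    have hDeq : symmDiff (G.edgeSet \ {s(u,v)}) B'.edgeSet
        = (symmDiff G.edgeSet B'.edgeSet) \ {s(u,v)} := by
      ext e
      by_cases he : e = s(u,v)
      · subst he
        simp only [Set.mem_symmDiff, Set.mem_diff, Set.mem_singleton_iff]
        constructor
        · rintro (⟨⟨h1, h2⟩, _⟩ | ⟨h1, h2⟩)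
          · exact absurd h2 (by simp)
          · exact absurd h1 hnB
        · rintro ⟨_, h2⟩
          exact absurd h2 (by simp)
      · simp only [Set.mem_symmDiff, Set.mem_diff, Set.mem_singleton_iff, he]
        tauto
    rw [hdel, hDeq, Set.ncard_diff_singleton_of_mem hmemD]
    have hfin := le_trans hle hcost
    omega
  · rintro ⟨B, hBc, hcost⟩
    refine ⟨B, hBc, ?_⟩
    rw [hdel] at hcost
    have hsub : symmDiff G.edgeSet B.edgeSet
        ⊆ insert s(u,v) (symmDiff (G.edgeSet \ {s(u,v)}) B.edgeSet) := by
      intro e he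
      rw [Set.mem_symmDiff] at he
      by_cases h : e = s(u,v)
      · exact Set.mem_insert_iff.mpr (Or.inl h)
      · refine Set.mem_insert_iff.mpr (Or.inr ?_)
        rw [Set.mem_symmDiff]
        rcases he with ⟨h1, h2⟩ | ⟨h1, h2⟩
        · exact Or.inl ⟨⟨h1, h⟩, h2⟩
        · exact Or.inr ⟨h1, fun hc => h2 hc.1⟩
    have h1 := Set.ncard_le_ncard hsub (Set.toFinite _)
    have h2 := Set.ncard_insert_le s(u,v) (symmDiff (G.edgeSet \ {s(u,v)}) B.edgeSet)
    omega
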